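/- Let p be an odd prime, s ≥ 2, and let n, m be nonnegative integers with n ≥ m + 1. Let l, u be integers with 0 ≤ l ≤ s − 2, u ≥ 1, p ∤ u, u < p^(s−1−l). Then C(n·p^s, m·p^s + u·p^(l+1) + 1) ≡ (−1)^u · (m+1) · C(n, m+1) · p^s (mod p^(s+1)). -/

import Mathlib

-- Lucas's theorem iterated: C(n p^s, m p^s) ≡ C(n, m) mod p
lemma lucas_pow (p : ℕ) (hp : p.Prime) (s n m : ℕ) :
    ((n * p ^ s).choose (m * p ^ s) : ℤ) ≡ (n.choose m : ℤ) [ZMOD (p : ℤ)] := by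
  haveI : Fact p.Prime := ⟨hp⟩
  induction s with
  | zero => simp
  | succ s ih =>
    have h := Choose.choose_modEq_choose_mod_mul_choose_div
      (p := p) (n := n * p ^ (s+1)) (k := m * p ^ (s+1))
    have hp0 : 0 < p := hp.pos
    have e1 : (n * p ^ (s+1)) % p = 0 := by
      simp [pow_succ, ← mul_assoc, Nat.mul_mod_left]
    have e2 : (m * p ^ (s+1)) % p = 0 := by
      simp [pow_succ, ← mul_assoc, Nat.mul_mod_left]
    have e3 : (n * p ^ (s+1)) / p = n * p ^ s := by
      rw [pow_succ, ← mul_assoc]; exact Nat.mul_div_cancel _ hp0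
    have e4 : (m * p ^ (s+1)) / p = m * p ^ s := by
      rw [pow_succ, ← mul_assoc]; exact Nat.mul_div_cancel _ hp0
    rw [e1, e2, e3, e4] at h
    refine h.trans ?_
    simpa using ih

-- shifting identity for binomial coefficients
lemma choose_shift (N a : ℕ) (r : ℕ) (h : a + r ≤ N) :
    (N.choose (a + r) : ℤ) * ∏ i ∈ Finset.range r, ((a : ℤ) + i + 1)
      = (N.choose a : ℤ) * ∏ i ∈ Finset.range r, ((N : ℤ) - a - i) := by
  induction r with
  | zero => simp
  | succ k ih =>
    have h' : a + k ≤ N := by omega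
    have key := Nat.choose_succ_right_eq N (a + k)
    have hle : a + k ≤ N := h'
    have keyZ : (N.choose (a + k + 1) : ℤ) * ((a : ℤ) + k + 1)
        = (N.choose (a + k) : ℤ) * ((N : ℤ) - a - k) := by
      have := congrArg (fun x : ℕ => (x : ℤ)) key
      push_cast [Nat.cast_sub hle] at this
      convert this using 2 <;> push_cast <;> ring
    rw [Finset.prod_range_succ, Finset.prod_range_succ]
    have : a + (k+1) = a + k + 1 := by ring
    rw [this]
    calc (N.choose (a + k + 1) : ℤ) * ((∏ i ∈ Finset.range k, ((a:ℤ) + i + 1)) * ((a:ℤ) + k + 1))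
        = ((N.choose (a + k + 1) : ℤ) * ((a:ℤ) + k + 1)) * ∏ i ∈ Finset.range k, ((a:ℤ) + i + 1) := by ring
      _ = ((N.choose (a + k) : ℤ) * ((N:ℤ) - a - k)) * ∏ i ∈ Finset.range k, ((a:ℤ) + i + 1) := by rw [keyZ]
      _ = ((N.choose (a + k) : ℤ) * ∏ i ∈ Finset.range k, ((a:ℤ) + i + 1)) * ((N:ℤ) - a - k) := by ring
      _ = ((N.choose a : ℤ) * ∏ i ∈ Finset.range k, ((N:ℤ) - a - i)) * ((N:ℤ) - a - k) := by rw [ih h']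
      _ = (N.choose a : ℤ) * ((∏ i ∈ Finset.range k, ((N:ℤ) - a - i)) * ((N:ℤ) - a - k)) := by ring

-- valuation-tracking lemma for the two products
lemma key_prod (p : ℕ) (hp : p.Prime) (s : ℕ) (m c : ℕ) (K : ℕ) (hK : K < p ^ s) :
    ∃ (t : ℕ) (P' : ℤ),
      (∏ j ∈ Finset.range K, ((m : ℤ) * p ^ s + j + 1)) = (p : ℤ) ^ t * P' ∧
      ¬ (p : ℤ) ∣ P' ∧
      (p : ℤ) ^ (t + 1) ∣ ((∏ j ∈ Finset.range K, ((c : ℤ) * p ^ s - j - 1)) -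
        (-1) ^ K * ∏ j ∈ Finset.range K, ((m : ℤ) * p ^ s + j + 1)) := by
  induction K with
  | zero => exact ⟨0, 1, by simp, by simpa using (Nat.prime_iff_prime_int.mp hp).not_dvd_one, by simp⟩
  | succ K ih =>
    obtain ⟨t, P', hP, hPnd, hQ⟩ := ih (lt_trans (Nat.lt_succ_self K) hK)
    set v := (K+1).factorization p with hv
    set w := (K+1) / p ^ v with hw
    have hK1 : K + 1 ≠ 0 := Nat.succ_ne_zero K
    have hfac : p ^ v * w = K + 1 := Nat.ordProj_mul_ordCompl_eq_self (K+1) p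
    have hpw : ¬ p ∣ w := Nat.not_dvd_ordCompl hp hK1
    have hvs : v < s := by
      have h1 : p ^ v ≤ K + 1 := Nat.ordProj_le p hK1
      have h2 : p ^ v < p ^ s := lt_of_le_of_lt h1 hK
      exact (Nat.pow_lt_pow_iff_right hp.one_lt).mp h2
    have hsv : s = v + (s - v) := by omega
    have hsv1 : 1 ≤ s - v := by omega
    have hps : ((p:ℤ) ^ s) = (p:ℤ) ^ v * (p:ℤ) ^ (s - v) := by
      rw [← pow_add, ← hsv]
    have hKint : ((K:ℤ) + 1) = (p:ℤ) ^ v * (w:ℤ) := by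
      have := congrArg (fun x : ℕ => (x : ℤ)) hfac
      push_cast at this; linarith
    have hnewP : ((m : ℤ) * p ^ s + K + 1) = (p:ℤ) ^ v * ((m:ℤ) * p ^ (s - v) + w) := by
      rw [hps] at *; linarith [hKint]
    have hnewQ : ((c : ℤ) * p ^ s - K - 1) = (p:ℤ) ^ v * ((c:ℤ) * p ^ (s - v) - w) := by
      rw [hps] at *; linarith [hKint]
    have hndnew : ¬ (p : ℤ) ∣ ((m:ℤ) * p ^ (s - v) + w) := by
      intro hd
      apply hpw
      have : (p:ℤ) ∣ (w:ℤ) := by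
        have hdv : (p:ℤ) ∣ (m:ℤ) * (p:ℤ) ^ (s - v) :=
          Dvd.dvd.mul_left (dvd_pow_self _ (by omega)) _
        have := dvd_sub hd hdv
        simpa using this
      exact_mod_cast Int.ofNat_dvd.mp (by exact_mod_cast this)
    refine ⟨t + v, P' * ((m:ℤ) * p ^ (s - v) + w), ?_, ?_, ?_⟩
    · rw [Finset.prod_range_succ, hP]
      push_cast
      rw [hnewP]
      ring
    · rw [(Nat.prime_iff_prime_int.mp hp).dvd_mul]
      tauto
    · rw [Finset.prod_range_succ, Finset.prod_range_succ]
      set P := ∏ j ∈ Finset.range K, ((m : ℤ) * p ^ s + j + 1)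
      set Q := ∏ j ∈ Finset.range K, ((c : ℤ) * p ^ s - j - 1)
      have expand : Q * ((c : ℤ) * p ^ s - K - 1) - (-1) ^ (K+1) * (P * ((m : ℤ) * p ^ s + K + 1))
          = (Q - (-1) ^ K * P) * ((c : ℤ) * p ^ s - K - 1)
            + (-1) ^ K * P * (((c:ℤ) + m) * p ^ s) := by
        push_cast; ring
      rw [expand]
      apply dvd_add
      · have h1 : (p:ℤ) ^ (t + v + 1) = (p:ℤ)^(t+1) * (p:ℤ)^v := by rw [← pow_add]; ring_nf
        rw [h1]
        exact mul_dvd_mul hQ ⟨_, hnewQ⟩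
      · obtain ⟨P₀, hP₀⟩ : (p:ℤ)^t ∣ P := ⟨P', hP⟩
        have : (-1:ℤ) ^ K * P * (((c:ℤ) + m) * p ^ s)
            = (p:ℤ)^(t+s) * ((-1)^K * P₀ * ((c:ℤ)+m)) := by
          rw [hP₀, pow_add]; ring
        rw [this]
        exact Dvd.dvd.mul_right (pow_dvd_pow _ (by omega)) _

theorem stmt13 (p s n m l u : ℕ) (hp : p.Prime) (hodd : Odd p) (hs : 2 ≤ s)
    (hnm : m + 1 ≤ n) (hl : l ≤ s - 2) (hu1 : 1 ≤ u) (hpu : ¬ p ∣ u)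
    (hu2 : u < p ^ (s - 1 - l)) :
    (((n * p ^ s).choose (m * p ^ s + u * p ^ (l + 1) + 1) : ℤ)) ≡
      (-1) ^ u * (m + 1) * (n.choose (m + 1)) * (p : ℤ) ^ s
      [ZMOD ((p : ℤ) ^ (s + 1))] := by
  have hppos : 0 < p := hp.pos
  have hpZ : Prime (p : ℤ) := Nat.prime_iff_prime_int.mp hp
  set K := u * p ^ (l + 1) with hKdef
  have hKlt : K < p ^ s := by
    calc K < p ^ (s - 1 - l) * p ^ (l + 1) :=
          mul_lt_mul_of_pos_right hu2 (pow_pos hppos _)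
    _ = p ^ s := by rw [← pow_add]; congr 1; omega
  have hle : m * p ^ s + (K + 1) ≤ n * p ^ s := by
    calc m * p ^ s + (K + 1) ≤ m * p ^ s + p ^ s := by omega
    _ = (m + 1) * p ^ s := by ring
    _ ≤ n * p ^ s := Nat.mul_le_mul_right _ hnm
  have hid := choose_shift (n * p ^ s) (m * p ^ s) (K + 1) hle
  have harg : m * p ^ s + (K + 1) = m * p ^ s + K + 1 := by omega
  rw [harg] at hid
  push_cast at hid
  set X : ℤ := ((n * p ^ s).choose (m * p ^ s + K + 1) : ℤ) with hX
  set C : ℤ := ((n * p ^ s).choose (m * p ^ s) : ℤ) with hC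
  set c := n - m with hcdef
  have hc : (c : ℤ) = (n : ℤ) - m := by
    rw [hcdef]; push_cast [Nat.cast_sub (by omega : m ≤ n)]; ring
  set Pfull : ℤ := ∏ j ∈ Finset.range K, ((m : ℤ) * p ^ s + j + 1) with hPfull
  set Q : ℤ := ∏ j ∈ Finset.range K, ((c : ℤ) * p ^ s - j - 1) with hQdef
  set E : ℤ := (m : ℤ) * p ^ s + (K : ℤ) + 1 with hE
  have hprodL : ∏ i ∈ Finset.range (K + 1), ((m : ℤ) * p ^ s + i + 1) = Pfull * E := by
    rw [Finset.prod_range_succ]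
  have hprodR : ∏ i ∈ Finset.range (K + 1), ((n : ℤ) * p ^ s - (m : ℤ) * p ^ s - i)
      = Q * ((c : ℤ) * p ^ s) := by
    rw [Finset.prod_range_succ']
    congr 1
    · refine Finset.prod_congr rfl fun i _ => ?_
      push_cast [hc]; ring
    · rw [hc]; push_cast; ring
  rw [hprodL, hprodR] at hid
  obtain ⟨t, P', hP, hPnd, hQdvd⟩ := key_prod p hp s m c K hKlt
  rw [← hPfull] at hP
  rw [← hPfull, ← hQdef] at hQdvd
  have hluc : (p : ℤ) ∣ (n.choose m : ℤ) - C := (lucas_pow p hp s n m).dvd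
  set Chm : ℤ := (n.choose m : ℤ) with hChm
  set Ch' : ℤ := (n.choose (m + 1) : ℤ) with hCh'
  have hident : Chm * (c : ℤ) = ((m : ℤ) + 1) * Ch' := by
    have := congrArg (fun x : ℕ => (x : ℤ)) (Nat.choose_succ_right_eq n m)
    push_cast [Nat.cast_sub (by omega : m ≤ n)] at this
    rw [hc]; linarith
  have hsign : (-1 : ℤ) ^ K = (-1 : ℤ) ^ u := by
    rw [hKdef, pow_mul]
    rcases Nat.even_or_odd u with he | ho
    · rw [he.neg_one_pow, one_pow]
    · rw [ho.neg_one_pow, (hodd.pow).neg_one_pow]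
  have hps1 : (p : ℤ) ^ s = p * p ^ (s - 1) := by
    rw [← pow_succ']; congr 1; omega
  have hpl1 : (p : ℤ) ^ (l + 1) = p * p ^ l := by rw [pow_succ']
  have hKZ : (K : ℤ) = (u : ℤ) * (p : ℤ) ^ (l + 1) := by rw [hKdef]; push_cast; ring
  set T₀ : ℤ := (-1) ^ u * ((m : ℤ) + 1) * Ch' with hT₀
  have hbr : (p : ℤ) ∣ (C * c * (-1) ^ K - T₀ * E) := by
    obtain ⟨e1, he1⟩ := hluc
    refine ⟨(-1 : ℤ) ^ u * (-(e1 * c) - ((m : ℤ) + 1) * Ch' * ((m : ℤ) * p ^ (s - 1) + u * p ^ l)), ?_⟩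
    have hCeq : C = Chm - p * e1 := by linarith
    rw [hsign, hCeq, hE, hKZ, hT₀]
    linear_combination ((-1 : ℤ) ^ u) * hident
      - ((-1 : ℤ) ^ u * ((m : ℤ) + 1) * Ch' * m) * hps1
      - ((-1 : ℤ) ^ u * ((m : ℤ) + 1) * Ch' * u) * hpl1
  set F : ℤ := C * c * Q - T₀ * Pfull * E with hF
  have hFdvd : (p : ℤ) ^ (t + 1) ∣ F := by
    have hsplit : F = C * c * (Q - (-1) ^ K * Pfull) + Pfull * (C * c * (-1) ^ K - T₀ * E) := by
      rw [hF]; ring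
    rw [hsplit]
    refine dvd_add (Dvd.dvd.mul_left hQdvd _) ?_
    rw [pow_succ]
    exact mul_dvd_mul ⟨P', hP⟩ hbr
  have he : (X - T₀ * (p : ℤ) ^ s) * (Pfull * E) = (p : ℤ) ^ s * F := by
    rw [hF]; linear_combination hid
  have hfull : (p : ℤ) ^ (s + t + 1) ∣ (X - T₀ * (p : ℤ) ^ s) * (Pfull * E) := by
    rw [he]
    have h3 : (p : ℤ) ^ (s + t + 1) = (p : ℤ) ^ s * (p : ℤ) ^ (t + 1) := by
      ring
    rw [h3]
    exact mul_dvd_mul_left _ hFdvd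
  have hcan : (p : ℤ) ^ (s + 1) ∣ (X - T₀ * (p : ℤ) ^ s) * (P' * E) := by
    have hfact : (X - T₀ * (p : ℤ) ^ s) * (Pfull * E)
        = (p : ℤ) ^ t * ((X - T₀ * (p : ℤ) ^ s) * (P' * E)) := by
      rw [hP]; ring
    have h2 : (p : ℤ) ^ t * (p : ℤ) ^ (s + 1) ∣ (p : ℤ) ^ t * ((X - T₀ * (p : ℤ) ^ s) * (P' * E)) := by
      rw [← hfact]
      have h3 : (p : ℤ) ^ (s + t + 1) = (p : ℤ) ^ t * (p : ℤ) ^ (s + 1) := by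
        rw [← pow_add]; congr 1; omega
      rw [← h3]
      exact hfull
    exact (mul_dvd_mul_iff_left (pow_ne_zero t (by exact_mod_cast hppos.ne'))).mp h2
  have hnotE : ¬ (p : ℤ) ∣ E := by
    intro hd
    have h1 : (p : ℤ) ∣ (m : ℤ) * p ^ s + K := by
      rw [hKZ, hps1, hpl1]
      exact ⟨(m : ℤ) * p ^ (s - 1) + u * p ^ l, by ring⟩
    have h2 : (p : ℤ) ∣ (1 : ℤ) := by
      have h3 : E - ((m : ℤ) * p ^ s + K) = 1 := by rw [hE]; ring
      have := dvd_sub hd h1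
      rwa [h3] at this
    exact hpZ.not_dvd_one h2
  have hnotPE : ¬ (p : ℤ) ∣ (P' * E) := by
    rw [hpZ.dvd_mul]; tauto
  have hdvd : (p : ℤ) ^ (s + 1) ∣ (X - T₀ * (p : ℤ) ^ s) :=
    hpZ.pow_dvd_of_dvd_mul_right (s+1) hnotPE hcan
  have hfin : X ≡ T₀ * (p : ℤ) ^ s [ZMOD ((p : ℤ) ^ (s + 1))] :=
    (Int.modEq_iff_dvd.mpr hdvd).symm
  rw [hT₀] at hfin
  exact hfin
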